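/- Let H₁ and H₂ be complex Banach spaces, U ⊆ ℂ an open connected set, and f : U → B(H₁,H₂) an analytic map into the Banach space of continuous linear operators with the operator norm, such that f(z) is Fredholm for every z ∈ U and f(z₀) is bijective for at least one point z₀ ∈ U. Then the set D = {z ∈ U : f(z) is not bijective} is discrete and closed in U, i.e. D has no accumulation point in U. -/

import Mathlib

open Filter Topology Module
set_option maxHeartbeats 1000000

private theorem aux_clm_conj {F G F₂ G₂ : Type*}
    [NormedAddCommGroup F] [NormedSpace ℂ F] [NormedAddCommGroup G] [NormedSpace ℂ G]
    [NormedAddCommGroup F₂] [NormedSpace ℂ F₂] [NormedAddCommGroup G₂] [NormedSpace ℂ G₂]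
    {T : ℂ → F →L[ℂ] G} {z : ℂ} (hT : AnalyticAt ℂ T z)
    (A : G →L[ℂ] G₂) (B : F₂ →L[ℂ] F) :
    AnalyticAt ℂ (fun w => A.comp ((T w).comp B)) z :=
  ((ContinuousLinearMap.compL ℂ F₂ G G₂ A).analyticAt _).comp
    ((((ContinuousLinearMap.compL ℂ F₂ F G).flip B).analyticAt _).comp hT)

private theorem local_dichotomy
    {H₁ H₂ : Type*} [NormedAddCommGroup H₁] [NormedSpace ℂ H₁] [CompleteSpace H₁]
    [NormedAddCommGroup H₂] [NormedSpace ℂ H₂] [CompleteSpace H₂]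
    (f : ℂ → H₁ →L[ℂ] H₂) {z₁ : ℂ} (hfz : AnalyticAt ℂ f z₁)
    (hker : FiniteDimensional ℂ (LinearMap.ker (f z₁ : H₁ →ₗ[ℂ] H₂)))
    (hquot : FiniteDimensional ℂ (H₂ ⧸ LinearMap.range (f z₁ : H₁ →ₗ[ℂ] H₂))) :
    (∀ᶠ w in 𝓝 z₁, ¬ Function.Bijective (f w)) ∨
      (∀ᶠ w in 𝓝[≠] z₁, Function.Bijective (f w)) := by
  set N := LinearMap.ker (f z₁ : H₁ →ₗ[ℂ] H₂) with hN
  set R := LinearMap.range (f z₁ : H₁ →ₗ[ℂ] H₂) with hR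
  obtain ⟨Y, hY⟩ := Submodule.exists_isCompl R
  haveI : FiniteDimensional ℂ Y :=
    (Submodule.quotientEquivOfIsCompl R Y hY).finiteDimensional
  obtain ⟨p, hp⟩ := Submodule.ClosedComplemented.of_finiteDimensional N
  set ι : Y →L[ℂ] H₂ := Y.subtypeL with hι
  set G : ℂ → (H₁ × Y) →L[ℂ] H₂ × N :=
    fun z => ((f z).coprod ι).prod (p.coprod 0) with hGdef
  have hGapp : ∀ z (v : H₁ × Y), G z v = (f z v.1 + (v.2 : H₂), p v.1) := by
    intro z v
    simp [hGdef, hι]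
  -- analyticity of G
  have hG : AnalyticAt ℂ G z₁ := by
    have h1 : AnalyticAt ℂ (fun z => (ContinuousLinearMap.inl ℂ H₂ N).comp
        ((f z).comp (ContinuousLinearMap.fst ℂ H₁ Y))
        + (((0 : H₁ →L[ℂ] H₂).coprod ι).prod (p.coprod 0))) z₁ := by
      exact (aux_clm_conj hfz (ContinuousLinearMap.inl ℂ H₂ N)
        (ContinuousLinearMap.fst ℂ H₁ Y)).add analyticAt_const
    apply h1.congr
    filter_upwards with z
    refine ContinuousLinearMap.ext fun v => ?_
    rw [hGapp]
    simp [hι]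
  -- bijectivity of G z₁
  have hker0 : LinearMap.ker (G z₁ : H₁ × Y →ₗ[ℂ] H₂ × N) = ⊥ := by
    rw [LinearMap.ker_eq_bot']
    rintro ⟨x, y⟩ hxy
    rw [ContinuousLinearMap.coe_coe, hGapp z₁ (x, y)] at hxy
    obtain ⟨h1, h2⟩ := Prod.ext_iff.mp hxy
    simp only at h1 h2
    have hxR : f z₁ x = -(y : H₂) := eq_neg_of_add_eq_zero_left h1
    have hyR : -(y : H₂) ∈ R := ⟨x, hxR⟩
    have hy0 : -(y : H₂) = 0 :=
      Submodule.disjoint_def.mp hY.disjoint _ hyR (Y.neg_mem y.2)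
    have hy : y = 0 := by
      ext
      simpa [neg_eq_zero] using hy0
    have hxN : x ∈ N := by
      rw [hN, LinearMap.mem_ker, ContinuousLinearMap.coe_coe, hxR, hy0]
    have := hp ⟨x, hxN⟩
    rw [Prod.mk_eq_zero]
    refine ⟨?_, hy⟩
    have : p x = (⟨x, hxN⟩ : N) := this
    rw [h2] at this
    simpa using congrArg (Subtype.val) this.symm
  have hrange : LinearMap.range (G z₁ : H₁ × Y →ₗ[ℂ] H₂ × N) = ⊤ := by
    rw [LinearMap.range_eq_top]
    rintro ⟨h, n⟩
    have hh : h ∈ R ⊔ Y := by rw [hY.sup_eq_top]; trivial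
    obtain ⟨r, hr, y, hy, hry⟩ := Submodule.mem_sup.mp hh
    obtain ⟨x₀, hx₀⟩ := hr
    refine ⟨(x₀ - ↑(p x₀) + ↑n, ⟨y, hy⟩), ?_⟩
    rw [ContinuousLinearMap.coe_coe, hGapp]
    have e1 : f z₁ ((p x₀ : H₁)) = 0 := (p x₀).2
    have e2 : f z₁ (n : H₁) = 0 := n.2
    have c1 : f z₁ (x₀ - ↑(p x₀) + ↑n) + y = h := by
      rw [map_add, map_sub, e1, e2, ← ContinuousLinearMap.coe_coe, hx₀]
      simpa using hry
    have c2 : p (x₀ - ↑(p x₀) + ↑n) = n := by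
      rw [map_add, map_sub, hp (p x₀), hp n]
      simp
    exact Prod.ext c1 c2
  -- the invertible bordered operator at z₁
  set E := ContinuousLinearEquiv.ofBijective (G z₁) hker0 hrange with hE
  set h : ℂ → (H₂ × N) →L[ℂ] H₂ × N :=
    fun z => (G z).comp (E.symm : (H₂ × N) →L[ℂ] H₁ × Y) with hhdef
  have hh1 : h z₁ = 1 := by
    refine ContinuousLinearMap.ext fun v => ?_
    show G z₁ ((E.symm : (H₂ × N) →L[ℂ] H₁ × Y) v) = v
    exact E.apply_symm_apply v
  have hha : AnalyticAt ℂ h z₁ := by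
    have h1 := aux_clm_conj hG (ContinuousLinearMap.id ℂ (H₂ × N))
      (E.symm : (H₂ × N) →L[ℂ] H₁ × Y)
    apply h1.congr
    filter_upwards with z
    refine ContinuousLinearMap.ext fun v => ?_
    simp [hhdef]
  have hunit : ∀ᶠ w in 𝓝 z₁, IsUnit (h w) := by
    have hcont : ContinuousAt h z₁ := hha.continuousAt
    have hmem : {T : (H₂ × N) →L[ℂ] H₂ × N | IsUnit T} ∈ 𝓝 (h z₁) := by
      rw [hh1]
      exact (Units.isOpen (R := (H₂ × N) →L[ℂ] H₂ × N)).mem_nhds isUnit_one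
    exact hcont hmem
  set Ginv : ℂ → (H₂ × N) →L[ℂ] H₁ × Y :=
    fun z => ((E.symm : (H₂ × N) →L[ℂ] H₁ × Y)).comp (Ring.inverse (h z)) with hGinvdef
  have hGinva : AnalyticAt ℂ Ginv z₁ := by
    have h1 : AnalyticAt ℂ (fun z => Ring.inverse (h z)) z₁ := by
      have hu : IsUnit (h z₁) := by rw [hh1]; exact isUnit_one
      obtain ⟨u, hu'⟩ := hu
      have h2 : AnalyticAt ℂ (Ring.inverse : ((H₂ × N) →L[ℂ] H₂ × N) → _) (h z₁) := by
        rw [← hu']; exact analyticAt_inverse (𝕜 := ℂ) (A := (H₂ × N) →L[ℂ] H₂ × N) u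
      exact h2.comp hha
    exact ((ContinuousLinearMap.compL ℂ (H₂ × N) (H₂ × N) (H₁ × Y)
      (E.symm : (H₂ × N) →L[ℂ] H₁ × Y)).analyticAt _).comp h1
  have hkey : ∀ᶠ w in 𝓝 z₁, (∀ v, Ginv w (G w v) = v) ∧ (∀ v, G w (Ginv w v) = v) := by
    filter_upwards [hunit] with w hw
    obtain ⟨u, hu⟩ := hw
    have hinv : Ring.inverse (h w) = ↑u⁻¹ := by rw [← hu, Ring.inverse_unit]
    have hGE : ∀ v, G w ((E.symm : (H₂ × N) →L[ℂ] H₁ × Y) v) = h w v := fun v => rfl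
    constructor
    · intro v
      have e1 : G w v = h w (E v) := by
        rw [← hGE (E v)]
        congr 1
        exact (E.symm_apply_apply v).symm
      show (E.symm : (H₂ × N) →L[ℂ] H₁ × Y) (Ring.inverse (h w) (G w v)) = v
      rw [e1, hinv, ← hu]
      have : (↑u⁻¹ : (H₂ × N) →L[ℂ] H₂ × N) ((↑u : (H₂ × N) →L[ℂ] H₂ × N) (E v)) = E v := by
        rw [← ContinuousLinearMap.mul_apply, u.inv_mul, ContinuousLinearMap.one_apply]
      rw [this]
      exact E.symm_apply_apply v
    · intro v
      show G w ((E.symm : (H₂ × N) →L[ℂ] H₁ × Y) (Ring.inverse (h w) v)) = v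
      rw [hGE, hinv, ← hu, ← ContinuousLinearMap.mul_apply, u.mul_inv,
        ContinuousLinearMap.one_apply]
  -- the Schur complement block
  set s : ℂ → N →L[ℂ] Y :=
    fun z => (ContinuousLinearMap.snd ℂ H₁ Y).comp
      ((Ginv z).comp (ContinuousLinearMap.inr ℂ H₂ N)) with hsdef
  have hsw : ∀ w (n : N), s w n = (Ginv w (0, n)).2 := fun w n => rfl
  have hsa : AnalyticAt ℂ s z₁ :=
    aux_clm_conj hGinva (ContinuousLinearMap.snd ℂ H₁ Y) (ContinuousLinearMap.inr ℂ H₂ N)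
  -- Schur complement equivalence
  have hSchur : ∀ w, (∀ v, Ginv w (G w v) = v) → (∀ v, G w (Ginv w v) = v) →
      (Function.Bijective (f w) ↔ Function.Bijective (s w)) := by
    intro w hleft hright
    constructor
    · intro hfw
      constructor
      · -- injectivity of s w
        have h0 : ∀ m : N, s w m = 0 → m = 0 := by
          intro m hm
          have hA := hright (0, m)
          rw [hGapp] at hA
          have h2 : ((Ginv w (0, m)).2 : H₂) = 0 := by
            rw [← hsw w m, hm]
            simp
          rw [h2, add_zero] at hA
          have h1 : f w (Ginv w (0, m)).1 = 0 := (Prod.ext_iff.mp hA).1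
          have h3 : (Ginv w (0, m)).1 = 0 := hfw.1 (by rw [h1, map_zero])
          have h4 : p (Ginv w (0, m)).1 = m := (Prod.ext_iff.mp hA).2
          rw [h3, map_zero] at h4
          exact h4.symm
        intro n n' hnn
        have : s w (n - n') = 0 := by rw [map_sub, hnn, sub_self]
        exact sub_eq_zero.mp (h0 _ this)
      · -- surjectivity of s w
        intro y
        obtain ⟨x₀, hx₀⟩ := hfw.2 (-(y : H₂))
        refine ⟨p x₀, ?_⟩
        have hB := hleft (x₀, y)
        rw [hGapp] at hB
        have hz : f w x₀ + (y : H₂) = 0 := by rw [hx₀]; exact neg_add_cancel _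
        simp only at hB
        rw [hz] at hB
        rw [hsw w (p x₀), hB]
    · intro hsbij
      constructor
      · -- injectivity of f w
        intro x x' hxx
        have hd : f w (x - x') = 0 := by rw [map_sub, hxx, sub_self]
        have hB := hleft (x - x', 0)
        rw [hGapp] at hB
        simp only [hd] at hB
        rw [show ((0 : Y) : H₂) = 0 from rfl, add_zero] at hB
        have h1 : s w (p (x - x')) = 0 := by rw [hsw, hB]
        have h2 : p (x - x') = 0 := hsbij.1 (by rw [h1, map_zero])
        rw [h2] at hB
        have h3 : Ginv w (0, (0 : N)) = 0 := by
          rw [show ((0 : H₂), (0 : N)) = (0 : H₂ × N) from rfl, map_zero]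
        rw [h3] at hB
        have h4 : x - x' = 0 := by
          have := congrArg Prod.fst hB
          simpa using this.symm
        exact sub_eq_zero.mp h4
      · -- surjectivity of f w
        intro t
        obtain ⟨m, hm⟩ := hsbij.2 ((Ginv w (t, 0)).2)
        refine ⟨(Ginv w (t, -m)).1, ?_⟩
        have hA := hright (t, -m)
        rw [hGapp] at hA
        have hsplit : (Ginv w (t, -m)).2 = 0 := by
          have hadd : Ginv w (t, -m) = Ginv w (t, 0) + Ginv w (0, -m) := by
            rw [← map_add]
            congr 1
            simp
          rw [hadd, Prod.snd_add]
          have h5 : (Ginv w (0, -m)).2 = - s w m := by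
            rw [← hsw w (-m), map_neg]
          rw [h5, hm]
          exact add_neg_cancel _
        have h6 := (Prod.ext_iff.mp hA).1
        rw [hsplit] at h6
        simpa using h6
  -- finite-dimensional reduction
  by_cases hdim : finrank ℂ N = finrank ℂ Y
  · -- equal dimensions: use the determinant
    set b := Module.finBasis ℂ N with hb
    set c := Module.finBasisOfFinrankEq ℂ Y hdim.symm with hc
    set M : ℂ → Matrix (Fin (finrank ℂ N)) (Fin (finrank ℂ N)) ℂ :=
      fun z => LinearMap.toMatrix b c ((s z) : N →ₗ[ℂ] Y) with hM
    have hMa : ∀ i j, AnalyticAt ℂ (fun z => M z i j) z₁ := by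
      intro i j
      have he : (fun z => M z i j)
          = fun z => (c.coord i).toContinuousLinearMap
              ((ContinuousLinearMap.apply ℂ Y (b j)) (s z)) := by
        funext z
        simp [hM, LinearMap.toMatrix_apply, Basis.coord_apply]
      rw [he]
      exact ((c.coord i).toContinuousLinearMap.analyticAt _).comp
        (((ContinuousLinearMap.apply ℂ Y (b j)).analyticAt _).comp hsa)
    have hga : AnalyticAt ℂ (fun z => (M z).det) z₁ := by
      have he : (fun z => (M z).det) = fun z => ∑ σ : Equiv.Perm (Fin (finrank ℂ N)),
          ((Equiv.Perm.sign σ : ℤ) : ℂ) * ∏ i, M z (σ i) i := by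
        funext z
        exact Matrix.det_apply' (M z)
      rw [he]
      exact Finset.analyticAt_fun_sum _ (fun σ _ => analyticAt_const.mul
        (Finset.analyticAt_fun_prod _ (fun i _ => hMa (σ i) i)))
    have hdet : ∀ w, Function.Bijective (s w) ↔ (M w).det ≠ 0 := by
      intro w
      constructor
      · intro hbijw
        have hbijw' : Function.Bijective ((s w : N →ₗ[ℂ] Y)) := hbijw
        set e := LinearEquiv.ofBijective ((s w) : N →ₗ[ℂ] Y) hbijw' with he
        have hcomp : ((e.symm : Y →ₗ[ℂ] N).comp ((s w) : N →ₗ[ℂ] Y)) = LinearMap.id :=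
          LinearMap.ext fun n => e.symm_apply_apply n
        have hunit' : IsUnit (M w) := by
          refine (Matrix.isUnit_iff_isUnit_det _).mpr (Matrix.isUnit_det_of_left_inverse (B := LinearMap.toMatrix c b (e.symm : Y →ₗ[ℂ] N)) ?_)
          rw [hM, ← LinearMap.toMatrix_comp b c b, hcomp, LinearMap.toMatrix_id]
        exact ((Matrix.isUnit_iff_isUnit_det _).mp hunit').ne_zero
      · intro hdet0
        have hu : IsUnit (M w) := (Matrix.isUnit_iff_isUnit_det _).mpr
          (isUnit_iff_ne_zero.mpr hdet0)
        obtain ⟨u, hu'⟩ := hu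
        set t := Matrix.toLin c b (↑u⁻¹ : Matrix (Fin (finrank ℂ N)) (Fin (finrank ℂ N)) ℂ)
          with ht
        have hsl : ((s w) : N →ₗ[ℂ] Y) = Matrix.toLin b c (M w) := by
          rw [hM, Matrix.toLin_toMatrix]
        have h1 : ∀ n, t (s w n) = n := by
          intro n
          have hcomp : t.comp ((s w) : N →ₗ[ℂ] Y) = LinearMap.id := by
            rw [hsl, ht, ← Matrix.toLin_mul, ← hu', u.inv_mul, Matrix.toLin_one]
          exact DFunLike.congr_fun hcomp n
        have h2 : ∀ y, s w (t y) = y := by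
          intro y
          have hcomp : ((s w) : N →ₗ[ℂ] Y).comp t = LinearMap.id := by
            rw [hsl, ht, ← Matrix.toLin_mul, ← hu', u.mul_inv, Matrix.toLin_one]
          exact DFunLike.congr_fun hcomp y
        exact Function.bijective_iff_has_inverse.mpr ⟨t, h1, h2⟩
    rcases hga.eventually_eq_zero_or_eventually_ne_zero with hcase | hcase
    · left
      filter_upwards [hkey, hcase] with w hw hgw
      intro hbijw
      exact (hdet w).mp ((hSchur w hw.1 hw.2).mp hbijw) hgw
    · right
      filter_upwards [hcase, hkey.filter_mono nhdsWithin_le_nhds] with w hgw hw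
      exact (hSchur w hw.1 hw.2).mpr ((hdet w).mpr hgw)
  · -- distinct dimensions: f w is nowhere bijective near z₁
    left
    filter_upwards [hkey] with w hw
    intro hbijw
    have hsbij : Function.Bijective ((s w : N →ₗ[ℂ] Y)) := (hSchur w hw.1 hw.2).mp hbijw
    exact hdim (LinearEquiv.finrank_eq (LinearEquiv.ofBijective ((s w) : N →ₗ[ℂ] Y) hsbij))




/-- Analytic Fredholm theorem: if `f` is an analytic family of Fredholm operators between
complex Banach spaces on an open connected set `U ⊆ ℂ`, and `f z₀` is bijective for some
`z₀ ∈ U`, then the set of points of `U` where `f` fails to be bijective has no accumulation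
point in `U`. -/
theorem analytic_fredholm_family_noninvertible_set_discrete
    {H₁ H₂ : Type*} [NormedAddCommGroup H₁] [NormedSpace ℂ H₁] [CompleteSpace H₁]
    [NormedAddCommGroup H₂] [NormedSpace ℂ H₂] [CompleteSpace H₂]
    {U : Set ℂ} (hU : IsOpen U) (hUconn : IsConnected U)
    (f : ℂ → H₁ →L[ℂ] H₂) (hf : AnalyticOnNhd ℂ f U)
    (hFred : ∀ z ∈ U, FiniteDimensional ℂ (LinearMap.ker (f z : H₁ →ₗ[ℂ] H₂)) ∧
      IsClosed (LinearMap.range (f z : H₁ →ₗ[ℂ] H₂) : Set H₂) ∧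
      FiniteDimensional ℂ (H₂ ⧸ LinearMap.range (f z : H₁ →ₗ[ℂ] H₂)))
    (z₀ : ℂ) (hz₀ : z₀ ∈ U) (hbij : Function.Bijective (f z₀)) :
    ∀ z ∈ U, ¬ AccPt z (Filter.principal {w ∈ U | ¬ Function.Bijective (f w)}) := by
  have hloc : ∀ z₁ ∈ U, (∀ᶠ w in 𝓝 z₁, ¬ Function.Bijective (f w)) ∨
      (∀ᶠ w in 𝓝[≠] z₁, Function.Bijective (f w)) := by
    intro z₁ h
    haveI := (hFred z₁ h).1
    haveI := (hFred z₁ h).2.2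
    exact local_dichotomy f (hf z₁ h) (hFred z₁ h).1 (hFred z₁ h).2.2
  set W₁ := {x : ℂ | ∀ᶠ w in 𝓝 x, ¬ Function.Bijective (f w)} with hW₁def
  set W₂ := {x : ℂ | ∀ᶠ w in 𝓝[≠] x, Function.Bijective (f w)} with hW₂def
  have hW₁ : IsOpen W₁ := isOpen_setOf_eventually_nhds
  have hW₂ : IsOpen W₂ := isOpen_setOf_eventually_nhdsWithin
  have hdisj : Disjoint W₂ W₁ := by
    rw [Set.disjoint_left]
    intro x h2 h1
    have h2' : ∀ᶠ w in 𝓝[≠] x, Function.Bijective (f w) := h2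
    have h1x : ∀ᶠ w in 𝓝 x, ¬ Function.Bijective (f w) := h1
    have h1' : ∀ᶠ w in 𝓝[≠] x, ¬ Function.Bijective (f w) :=
      h1x.filter_mono nhdsWithin_le_nhds
    obtain ⟨w, hw1, hw2⟩ := (h2'.and h1').exists
    exact hw2 hw1
  have hsub : U ⊆ W₂ ∪ W₁ := fun z hz => (hloc z hz).symm
  have hz₀W₂ : z₀ ∈ W₂ := by
    rcases hloc z₀ hz₀ with h | h
    · exact absurd hbij h.self_of_nhds
    · exact h
  have hUW₂ : U ⊆ W₂ :=
    hUconn.isPreconnected.subset_left_of_subset_union hW₂ hW₁ hdisj hsub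
      ⟨z₀, hz₀, hz₀W₂⟩
  intro z hz hacc
  have h2 : ∀ᶠ w in 𝓝[≠] z, Function.Bijective (f w) := hUW₂ hz
  have hmem : {w : ℂ | w ∈ U ∧ ¬ Function.Bijective (f w)} ∩
      {w : ℂ | Function.Bijective (f w)} ∈
      𝓝[≠] z ⊓ Filter.principal {w ∈ U | ¬ Function.Bijective (f w)} :=
    Filter.inter_mem (Filter.mem_inf_of_right (Filter.mem_principal_self _))
      (Filter.mem_inf_of_left h2)
  obtain ⟨w, hw1, hw2⟩ := hacc.nonempty_of_mem hmem
  exact hw1.2 hw2
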